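/- Let S be a finitely branching synchronous system. For all states p and q, the inductively defined relation p ≁ q holds if and only if p and q are not bisimilar. -/

import Mathlib

/-- A synchronous system over input set `In` and output set `Out`,
with state set `Q`, transition relation `E` and output function `out`. -/
structure SyncSys (In : Type*) (Out : Type*) (Q : Type*) where
  E : Q → In → Q → Prop
  out : Q → Out

namespace SyncSys

variable {In Out Q : Type*}

/-- A system is complete if every state has a successor on every input. -/
def Complete (S : SyncSys In Out Q) : Prop := ∀ p a, ∃ q, S.E p a q

/-- A system is finitely branching if every state has finitely many successors on each input. -/
def FinBranch (S : SyncSys In Out Q) : Prop := ∀ p a, {q | S.E p a q}.Finite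

/-- `R` is a bisimulation on the states of `S`. -/
def IsBisimulation (S : SyncSys In Out Q) (R : Q → Q → Prop) : Prop :=
  ∀ p q, R p q → S.out p = S.out q ∧
    (∀ a p', S.E p a p' → ∃ q', S.E q a q' ∧ R p' q') ∧
    (∀ a q', S.E q a q' → ∃ p', S.E p a p' ∧ R p' q')

/-- `p` and `q` are bisimilar: they are related by some bisimulation. -/
def Bisim (S : SyncSys In Out Q) (p q : Q) : Prop :=
  ∃ R, IsBisimulation S R ∧ R p q

/-- `IsRun S q w qs`: `qs` is a run on the finite input word `w` starting from `q`
(the list `qs` is the sequence of states `q₀, q₁, …, qₙ`, with `q₀ = q`). -/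
inductive IsRun (S : SyncSys In Out Q) : Q → List In → List Q → Prop
  | nil (q : Q) : IsRun S q [] [q]
  | cons {q q' : Q} {a : In} {w : List In} {qs : List Q} :
      S.E q a q' → IsRun S q' w qs → IsRun S q (a :: w) (q :: qs)

/-- The output language of `S` at `q` on the input word `w`:
the output words of all runs on `w` from `q`. -/
def lang (S : SyncSys In Out Q) (q : Q) (w : List In) : Set (List Out) :=
  { o | ∃ qs, IsRun S q w qs ∧ o = qs.map S.out }

/-- `(a₁, a₂)` is a separating pair of state `q`. -/
def SepPair (S : SyncSys In Out Q) (a₁ a₂ : In) (q : Q) : Prop :=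
  a₁ ≠ a₂ ∧ ∃ q₁, S.E q a₁ q₁ ∧ ∀ q₂, S.E q a₂ q₂ → ¬ Bisim S q₁ q₂

/-- A state is reactive if it has a separating pair. -/
def Reactive (S : SyncSys In Out Q) (q : Q) : Prop := ∃ a₁ a₂, SepPair S a₁ a₂ q

/-- `(a₁, a₂)` is a strongly separating pair of the pair of states `(q₁, q₂)`. -/
def SSP (S : SyncSys In Out Q) (a₁ a₂ : In) (q₁ q₂ : Q) : Prop :=
  a₁ ≠ a₂ ∧
    ((∃ q₁', S.E q₁ a₁ q₁' ∧ ∀ q₂', S.E q₂ a₂ q₂' → ¬ Bisim S q₁' q₂') ∨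
     (∃ q₁', S.E q₁ a₂ q₁' ∧ ∀ q₂', S.E q₂ a₁ q₂' → ¬ Bisim S q₁' q₂'))

/-- Sequential composition `S_g ∘ S_f` of `S_f : (A, B)` and `S_g : (B, C)`. -/
def seqComp {A B C Qf Qg : Type*} (Sf : SyncSys A B Qf) (Sg : SyncSys B C Qg) :
    SyncSys A C (Qf × Qg) where
  E := fun pq a pq' => Sf.E pq.1 a pq'.1 ∧ Sg.E pq.2 (Sf.out pq.1) pq'.2
  out := fun pq => Sg.out pq.2

/-- Parallel composition `S_f ∥ S_g` of `S_f : (A, B)` and `S_g : (C, D)`. -/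
def parComp {A B C D Qf Qg : Type*} (Sf : SyncSys A B Qf) (Sg : SyncSys C D Qg) :
    SyncSys (A × C) (B × D) (Qf × Qg) where
  E := fun pq ac pq' => Sf.E pq.1 ac.1 pq'.1 ∧ Sg.E pq.2 ac.2 pq'.2
  out := fun pq => (Sf.out pq.1, Sg.out pq.2)

end SyncSys

namespace SyncSys

/-- The inductively defined non-bisimilarity relation `p ≁ q`. -/
inductive NotBisim {In Out Q : Type*} (S : SyncSys In Out Q) : Q → Q → Prop
  | base {p q : Q} : S.out p ≠ S.out q → NotBisim S p q
  | indl {p q : Q} {a : In} {p' : Q} :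
      S.E p a p' → (∀ q', S.E q a q' → NotBisim S p' q') → NotBisim S p q
  | indr {p q : Q} {a : In} {q' : Q} :
      S.E q a q' → (∀ p', S.E p a p' → NotBisim S p' q') → NotBisim S p q

end SyncSys

open SyncSys in
/-- for finitely branching systems, the inductive relation `≁`
coincides with the negation of bisimilarity. -/
theorem notBisim_iff_not_bisim {In Out Q : Type*} (S : SyncSys In Out Q)
    (hfb : S.FinBranch) (p q : Q) :
    NotBisim S p q ↔ ¬ Bisim S p q := by
  constructor
  · intro h
    induction h with
    | base hne => rintro ⟨R, hR, hpq⟩; exact hne (hR _ _ hpq).1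
    | indl hE _ ih =>
      rintro ⟨R, hR, hpq⟩
      obtain ⟨q', hq', hRq'⟩ := (hR _ _ hpq).2.1 _ _ hE
      exact ih _ hq' ⟨R, hR, hRq'⟩
    | indr hE _ ih =>
      rintro ⟨R, hR, hpq⟩
      obtain ⟨p', hp', hRp'⟩ := (hR _ _ hpq).2.2 _ _ hE
      exact ih _ hp' ⟨R, hR, hRp'⟩
  · intro h
    by_contra hn
    apply h
    refine ⟨fun p q => ¬ NotBisim S p q, ?_, hn⟩
    intro p q hpq
    refine ⟨?_, ?_, ?_⟩
    · by_contra hne; exact hpq (NotBisim.base hne)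
    · intro a p' hE
      by_contra hforall
      push_neg at hforall
      exact hpq (NotBisim.indl hE fun q' hq' => by
        by_contra hc; exact hc (hforall q' hq'))
    · intro a q' hE
      by_contra hforall
      push_neg at hforall
      exact hpq (NotBisim.indr hE fun p' hp' => by
        by_contra hc; exact hc (hforall p' hp'))
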